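/- arXiv:1103.1282 — 3 statements merged into one kernel-verified Lean document; each statement's English description precedes it below -/
import Mathlib

section
/- Let X be a Banach space with a 1-unconditional Schauder basis (e_n). Then the closed unit ball B_X is a slicely countably determined (SCD) set; that is, there exists a countable family of relatively weakly open subsets {V_n} of B_X such that every slice of B_X contains some V_n (equivalently, any closed convex subset of B_X meeting every V_n must equal B_X after taking closed convex hull). -/
open Metric Set

lemma stmt3_key {X : Type*} [NormedAddCommGroup X] [NormedSpace ℝ X]
    (e : ℕ → X) (c : ℕ → X →L[ℝ] ℝ)
    (hbasis : ∀ x : X, HasSum (fun n => c n x • e n) x)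
    (huncond : ∀ (x y : X) (θ : ℕ → ℝ), (∀ n, |θ n| = 1) →
      HasSum (fun n => θ n • c n x • e n) y → ‖y‖ = ‖x‖)
    (y : X) (n : ℕ) :
    ‖(2:ℝ) • (∑ j ∈ Finset.range n, c j y • e j) - y‖ = ‖y‖ := by
  set P := ∑ j ∈ Finset.range n, c j y • e j with hPdef
  have hg : HasSum (fun j => if j ∈ Finset.range n then c j y • e j else 0) P := by
    have := hasSum_sum_of_ne_finset_zero (L := SummationFilter.unconditional ℕ) (s := Finset.range n)
      (f := fun j => if j ∈ Finset.range n then c j y • e j else 0) (by intro b hb; simp [hb])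
    rwa [Finset.sum_ite_of_true (by exact fun i h => h)] at this
  have h2 : HasSum (fun j => (2:ℝ) • (if j ∈ Finset.range n then c j y • e j else 0)
      - c j y • e j) ((2:ℝ) • P - y) := (hg.const_smul (2:ℝ)).sub (hbasis y)
  refine huncond y _ (fun j => if j < n then (1:ℝ) else -1) ?_ ?_
  · intro j; by_cases h : j < n <;> simp [h]
  · convert h2 using 2 with j
    by_cases h : j < n <;> simp [h, Finset.mem_range, two_smul]

lemma stmt3_keyP {X : Type*} [NormedAddCommGroup X] [NormedSpace ℝ X]
    (e : ℕ → X) (c : ℕ → X →L[ℝ] ℝ)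
    (hbasis : ∀ x : X, HasSum (fun n => c n x • e n) x)
    (huncond : ∀ (x y : X) (θ : ℕ → ℝ), (∀ n, |θ n| = 1) →
      HasSum (fun n => θ n • c n x • e n) y → ‖y‖ = ‖x‖)
    (y : X) (n : ℕ) :
    ‖∑ j ∈ Finset.range n, c j y • e j‖ ≤ ‖y‖ := by
  set P := ∑ j ∈ Finset.range n, c j y • e j with hPdef
  have h1 := stmt3_key e c hbasis huncond y n
  have h2 : P = (2⁻¹:ℝ) • (((2:ℝ) • P - y) + y) := by module
  calc ‖P‖ = ‖(2⁻¹:ℝ)‖ * ‖((2:ℝ) • P - y) + y‖ := by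
        conv_lhs => rw [h2]
        rw [norm_smul]
    _ ≤ ‖(2⁻¹:ℝ)‖ * (‖(2:ℝ) • P - y‖ + ‖y‖) := by
        gcongr; exact norm_add_le _ _
    _ = ‖y‖ := by rw [h1]; simp [norm_inv]; ring

set_option maxHeartbeats 1000000 in
/-- Let `X` be a Banach space with a 1-unconditional Schauder basis
`(e_n)` (with biorthogonal coordinate functionals `c_n`). Then the closed unit ball
`B_X` is a slicely countably determined (SCD) set: there exists a countable family of
nonempty relatively weakly open subsets `{V_n}` of `B_X` such that every slice of
`B_X` contains some `V_n`. -/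
theorem stmt3 {X : Type*} [NormedAddCommGroup X] [NormedSpace ℝ X] [CompleteSpace X]
    (e : ℕ → X) (c : ℕ → X →L[ℝ] ℝ)
    (hbi : ∀ n m : ℕ, c n (e m) = if n = m then 1 else 0)
    (hbasis : ∀ x : X, HasSum (fun n => c n x • e n) x)
    (huncond : ∀ (x y : X) (θ : ℕ → ℝ), (∀ n, |θ n| = 1) →
      HasSum (fun n => θ n • c n x • e n) y → ‖y‖ = ‖x‖) :
    ∃ V : ℕ → Set X,
      (∀ n, (V n).Nonempty ∧
        ∃ U : Set (WeakSpace ℝ X), IsOpen U ∧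
          V n = closedBall (0 : X) 1 ∩ (toWeakSpace ℝ X ⁻¹' U)) ∧
      (∀ (f : X →L[ℝ] ℝ), ‖f‖ = 1 → ∀ α : ℝ, 0 < α →
        ∃ n, V n ⊆ {x ∈ closedBall (0 : X) 1 | 1 - α < f x}) := by
  classical
  obtain ⟨σ, hσ⟩ := exists_surjective_nat ((Σ n : ℕ, Fin n → ℚ) × ℕ)
  -- the candidate finitely supported points
  set a : (Σ n : ℕ, Fin n → ℚ) × ℕ → X :=
    fun p => ∑ j : Fin p.1.1, ((p.1.2 j : ℝ)) • e (j : ℕ) with ha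
  -- the weakly open sets
  set U : (Σ n : ℕ, Fin n → ℚ) × ℕ → Set (WeakSpace ℝ X) :=
    fun p => ⋂ j : Fin p.1.1,
      {φ : WeakSpace ℝ X | |(topDualPairing ℝ X).flip φ (c (j : ℕ)) - (p.1.2 j : ℝ)|
        < 1 / (p.2 + 1)} with hU
  set W : (Σ n : ℕ, Fin n → ℚ) × ℕ → Set X :=
    fun p => closedBall (0 : X) 1 ∩
      {x : X | ∀ j : Fin p.1.1, |c (j : ℕ) x - (p.1.2 j : ℝ)| < 1 / (p.2 + 1)} with hW
  have hUopen : ∀ p, IsOpen (U p) := by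
    intro p
    refine isOpen_iInter_of_finite fun j => ?_
    have hc : Continuous fun φ : WeakSpace ℝ X =>
        (topDualPairing ℝ X).flip φ (c (j : ℕ)) :=
      WeakBilin.eval_continuous _ _
    have : IsOpen {t : ℝ | |t - (p.1.2 j : ℝ)| < 1 / (p.2 + 1)} := by
      have : {t : ℝ | |t - (p.1.2 j : ℝ)| < 1 / (p.2 + 1)} = Metric.ball
          ((p.1.2 j : ℝ)) (1 / (p.2 + 1)) := by
        ext t; simp [Metric.mem_ball, Real.dist_eq]
      rw [this]; exact Metric.isOpen_ball
    exact this.preimage hc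
  have hWform : ∀ p, W p = closedBall (0 : X) 1 ∩ (toWeakSpace ℝ X ⁻¹' U p) := by
    intro p
    ext x
    simp only [hW, hU, Set.mem_inter_iff, Set.mem_setOf_eq, Set.mem_preimage, Set.mem_iInter]
    constructor
    · rintro ⟨h1, h2⟩; exact ⟨h1, fun j => h2 j⟩
    · rintro ⟨h1, h2⟩; exact ⟨h1, fun j => h2 j⟩
  have haW : ∀ p, ‖a p‖ ≤ 1 → a p ∈ W p := by
    intro p hap
    refine ⟨by simpa [mem_closedBall_zero_iff] using hap, fun j => ?_⟩
    have : c (j : ℕ) (a p) = (p.1.2 j : ℝ) := by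
      simp only [ha, map_sum, map_smul, hbi]
      rw [Finset.sum_eq_single j]
      · simp
      · intro k _ hk
        have : (j : ℕ) ≠ (k : ℕ) := fun h => hk (Fin.ext h).symm
        simp [this]
      · simp
    rw [this]
    simp only [sub_self, abs_zero]
    positivity
  set V' : (Σ n : ℕ, Fin n → ℚ) × ℕ → Set X :=
    fun p => if ‖a p‖ ≤ 1 then W p else closedBall (0 : X) 1 with hV'
  refine ⟨fun k => V' (σ k), fun k => ?_, ?_⟩
  · -- nonempty and weakly open form
    by_cases hle : ‖a (σ k)‖ ≤ 1
    · refine ⟨⟨a (σ k), by simp [hV', hle, haW _ hle]⟩, U (σ k), hUopen _, ?_⟩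
      simp [hV', hle, hWform]
    · refine ⟨⟨0, by simp [hV', hle]⟩, Set.univ, isOpen_univ, ?_⟩
      simp [hV', hle]
  · -- every slice contains some V n
    intro f hf α hα
    -- reduce to α ≤ 1
    set β := min α 1 with hβ
    have hβpos : 0 < β := lt_min hα one_pos
    have hβle : β ≤ 1 := min_le_right _ _
    have hβα : β ≤ α := min_le_left _ _
    set ε := β / 16 with hε
    have hεpos : 0 < ε := by positivity
    have hεsmall : ε ≤ 1 / 16 := by rw [hε]; linarith
    -- find a point deep in the slice
    obtain ⟨x₁, hx₁norm, hx₁⟩ := f.exists_lt_apply_of_lt_opNorm (r := 1 - ε) (by rw [hf]; linarith)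
    set x₀ := if 0 ≤ f x₁ then x₁ else -x₁ with hx₀
    have hx₀norm : ‖x₀‖ ≤ 1 := by
      rw [hx₀]; split <;> simp [le_of_lt hx₁norm]
    have hx₀f : 1 - ε < f x₀ := by
      rw [Real.norm_eq_abs] at hx₁
      rw [hx₀]
      split_ifs with h
      · rwa [abs_of_nonneg h] at hx₁
      · rw [map_neg, ← abs_of_neg (not_le.mp h)]; exact hx₁
    set x' := (1 - ε) • x₀ with hx'
    have hx'norm : ‖x'‖ ≤ 1 - ε := by
      rw [hx', norm_smul, Real.norm_eq_abs, abs_of_nonneg (by linarith)]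
      nlinarith
    have hx'f : 1 - 2 * ε < f x' := by
      rw [hx', map_smul]
      rw [smul_eq_mul]
      have h1 : (0:ℝ) < 1 - ε := by linarith
      nlinarith [hx₀f, hεpos, hεsmall]
    -- partial sum approximation
    have htend := (hbasis x').tendsto_sum_nat
    rw [Metric.tendsto_atTop] at htend
    obtain ⟨n, hn⟩ := htend ε hεpos
    have hn' : ‖(∑ j ∈ Finset.range n, c j x' • e j) - x'‖ < ε := by
      have := hn n le_rfl
      rwa [dist_eq_norm] at this
    set P := ∑ j ∈ Finset.range n, c j x' • e j with hP
    have hPnorm : ‖P‖ ≤ 1 - ε :=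
      le_trans (stmt3_keyP e c hbasis huncond x' n) hx'norm
    have hfP : 1 - 3 * ε < f P := by
      have h1 : |f (P - x')| ≤ ‖P - x'‖ := by
        rw [← Real.norm_eq_abs]
        calc ‖f (P - x')‖ ≤ ‖f‖ * ‖P - x'‖ := f.le_opNorm _
          _ = ‖P - x'‖ := by rw [hf, one_mul]
      rw [map_sub] at h1
      have h2 := abs_le.mp h1
      linarith [h2.1, hn']
    -- sum of norms bound
    set S := (∑ j ∈ Finset.range n, ‖e j‖) + 1 with hS
    have hSpos : 0 < S := by
      have : 0 ≤ ∑ j ∈ Finset.range n, ‖e j‖ := Finset.sum_nonneg fun j _ => norm_nonneg _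
      linarith
    set δ := ε / S with hδ
    have hδpos : 0 < δ := by positivity
    -- rational approximations
    have hq : ∀ j : Fin n, ∃ q : ℚ, |c (j : ℕ) x' - (q : ℝ)| < δ :=
      fun j => exists_rat_near _ hδpos
    choose q hqspec using hq
    -- the small-perturbation bound
    have hpert : ∀ (y : X), (∀ j : Fin n, |c (j : ℕ) y - (q j : ℝ)| < δ) →
        ‖(∑ j ∈ Finset.range n, c j y • e j) - (∑ j : Fin n, ((q j : ℝ)) • e (j : ℕ))‖ < ε := by
      intro y hy
      have h1 : (∑ j ∈ Finset.range n, c j y • e j) = ∑ j : Fin n, c (j : ℕ) y • e (j : ℕ) :=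
        (Fin.sum_univ_eq_sum_range _ n).symm
      rw [h1, ← Finset.sum_sub_distrib]
      calc ‖∑ j : Fin n, (c (j : ℕ) y • e (j : ℕ) - ((q j : ℝ)) • e (j : ℕ))‖
          ≤ ∑ j : Fin n, ‖c (j : ℕ) y • e (j : ℕ) - ((q j : ℝ)) • e (j : ℕ)‖ :=
            norm_sum_le _ _
        _ = ∑ j : Fin n, |c (j : ℕ) y - (q j : ℝ)| * ‖e (j : ℕ)‖ := by
            congr 1; ext j
            rw [← sub_smul, norm_smul, Real.norm_eq_abs]
        _ ≤ ∑ j : Fin n, δ * ‖e (j : ℕ)‖ := by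
            gcongr with j
            · exact le_of_lt (hy j)
        _ = δ * ∑ j ∈ Finset.range n, ‖e j‖ := by
            rw [← Finset.mul_sum]; congr 1; exact Fin.sum_univ_eq_sum_range (fun i => ‖e i‖) n
        _ < ε := by
            rw [hδ]
            rw [div_mul_eq_mul_div, div_lt_iff₀ hSpos]
            have : ∑ j ∈ Finset.range n, ‖e j‖ < S := by rw [hS]; linarith
            nlinarith [Finset.sum_nonneg (fun j (_ : j ∈ Finset.range n) => norm_nonneg (e j))]
    -- choose m
    obtain ⟨m, hm⟩ := exists_nat_one_div_lt (K := ℝ) hδpos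
    set p : (Σ n : ℕ, Fin n → ℚ) × ℕ := (⟨n, q⟩, m) with hp
    -- a p is close to P
    have hx'q : ∀ j : Fin n, |c (j : ℕ) x' - (q j : ℝ)| < δ := hqspec
    have haclose : ‖P - a p‖ < ε := by
      have := hpert x' hx'q
      rw [← hP] at this
      exact this
    have hanorm : ‖a p‖ ≤ 1 := by
      have h1 : ‖a p‖ - ‖P‖ ≤ ‖a p - P‖ := norm_sub_norm_le _ _
      have h2 : ‖a p - P‖ = ‖P - a p‖ := norm_sub_rev _ _
      linarith
    have hfa : 1 - 4 * ε < f (a p) := by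
      have h1 : |f (P - a p)| ≤ ‖P - a p‖ := by
        rw [← Real.norm_eq_abs]
        calc ‖f (P - a p)‖ ≤ ‖f‖ * ‖P - a p‖ := f.le_opNorm _
          _ = ‖P - a p‖ := by rw [hf, one_mul]
      rw [map_sub] at h1
      have h2 := abs_le.mp h1
      linarith [h2.2, haclose]
    -- get the index
    obtain ⟨k, hk⟩ := hσ p
    refine ⟨k, ?_⟩
    show V' (σ k) ⊆ {x ∈ closedBall (0 : X) 1 | 1 - α < f x}
    rw [hk]
    have hVp : V' p = W p := by simp [hV', hanorm]
    rw [hVp]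
    rintro y ⟨hy1, hy2⟩
    have hynorm : ‖y‖ ≤ 1 := by rwa [mem_closedBall_zero_iff] at hy1
    refine ⟨hy1, ?_⟩
    -- y's coordinates are close to q
    have hyq : ∀ j : Fin n, |c (j : ℕ) y - (q j : ℝ)| < δ := by
      intro j
      exact lt_trans (hy2 j) hm
    set Py := ∑ j ∈ Finset.range n, c j y • e j with hPy
    have hPyclose : ‖Py - a p‖ < ε := hpert y hyq
    have hfPy : 1 - 5 * ε < f Py := by
      have h1 : |f (Py - a p)| ≤ ‖Py - a p‖ := by
        rw [← Real.norm_eq_abs]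
        calc ‖f (Py - a p)‖ ≤ ‖f‖ * ‖Py - a p‖ := f.le_opNorm _
          _ = ‖Py - a p‖ := by rw [hf, one_mul]
      rw [map_sub] at h1
      have h2 := abs_le.mp h1
      linarith [h2.1, hPyclose]
    -- the unconditionality trick
    have hkey : ‖(2:ℝ) • Py - y‖ = ‖y‖ := stmt3_key e c hbasis huncond y n
    have h3 : f ((2:ℝ) • Py - y) ≤ 1 := by
      calc f ((2:ℝ) • Py - y) ≤ ‖f ((2:ℝ) • Py - y)‖ := Real.le_norm_self _
        _ ≤ ‖f‖ * ‖(2:ℝ) • Py - y‖ := f.le_opNorm _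
        _ = ‖y‖ := by rw [hf, one_mul, hkey]
        _ ≤ 1 := hynorm
    have h4 : f y = 2 * f Py - f ((2:ℝ) • Py - y) := by
      rw [map_sub, map_smul, smul_eq_mul]; ring
    have h5 : 1 - 10 * ε < f y := by
      rw [h4]; linarith
    have : 1 - β < f y := by
      rw [hε] at h5; linarith
    linarith
end

section
/- Let X be a rearrangement invariant sequence space with the alternative Daugavet property, and let E be the closed linear span of the canonical basis vectors. Then E also has the alternative Daugavet property: for every x ∈ S_E, f ∈ S_{E*}, ε > 0 there exists y ∈ B_E with |f(y)| > 1 − ε and max_{|θ|=1} ‖θx + y‖ > 2 − ε. -/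
open Filter

/-- Let `X` be a rearrangement invariant sequence space (encoded as a
Banach space with a solid linear injection `ι` into the sequences, canonical vectors
`eX`, and the r.i. property `‖x‖ = lim_n ‖Σ_{k<n} x_k e_k‖`) with the alternative
Daugavet property, and let `E` be the closed linear span of the canonical basis
vectors. Then `E` also has the alternative Daugavet property: for every `x ∈ S_E`,
`f ∈ S_{E*}`, `ε > 0` there exists `y ∈ B_E` with `|f(y)| > 1 − ε` and
`max_{|θ|=1} ‖θx + y‖ > 2 − ε`. -/
theorem stmt8 {X : Type*} [NormedAddCommGroup X] [NormedSpace ℝ X] [CompleteSpace X]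
    (ι : X →ₗ[ℝ] ℕ → ℝ) (hinj : Function.Injective ι)
    (hsolid : ∀ x y : X, (∀ n, |ι x n| ≤ |ι y n|) → ‖x‖ ≤ ‖y‖)
    (eX : ℕ → X) (heX : ∀ n, ι (eX n) = Pi.single n 1)
    (hlim : ∀ x : X, Tendsto (fun n => ‖∑ k ∈ Finset.range n, ι x k • eX k‖)
      atTop (nhds ‖x‖))
    (hADP : ∀ x : X, ‖x‖ = 1 → ∀ f : X →L[ℝ] ℝ, ‖f‖ = 1 → ∀ ε : ℝ, 0 < ε →
      ∃ y : X, ‖y‖ = 1 ∧ f y > 1 - ε ∧ max ‖x + y‖ ‖x - y‖ > 2 - ε) :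
    ∀ x : (Submodule.span ℝ (Set.range eX)).topologicalClosure, ‖x‖ = 1 →
      ∀ f : (Submodule.span ℝ (Set.range eX)).topologicalClosure →L[ℝ] ℝ, ‖f‖ = 1 →
        ∀ ε : ℝ, 0 < ε →
          ∃ y : (Submodule.span ℝ (Set.range eX)).topologicalClosure,
            ‖y‖ ≤ 1 ∧ |f y| > 1 - ε ∧
              max ‖(x : X) + (y : X)‖ ‖(x : X) - (y : X)‖ > 2 - ε := by
  set E := (Submodule.span ℝ (Set.range eX)).topologicalClosure with hE
  intro x hx f hf ε hε
  have heXmem : ∀ k, eX k ∈ E :=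
    fun k => (Submodule.span ℝ (Set.range eX)).le_topologicalClosure
      (Submodule.subset_span ⟨k, rfl⟩)
  set S : ℕ → (ℕ → ℝ) → X := fun n σ => ∑ k ∈ Finset.range n, σ k • eX k with hS
  have hιS : ∀ n (σ : ℕ → ℝ) j, ι (S n σ) j = if j < n then σ j else 0 := by
    intro n σ j
    rw [hS]; rw [map_sum]
    have : ∀ k, ι (σ k • eX k) j = if j = k then σ k else 0 := by
      intro k
      rw [map_smul, heX]
      simp [Pi.single_apply, mul_ite]
    simp only [Finset.sum_apply, this]
    rw [Finset.sum_ite_eq]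
    simp [Finset.mem_range]
  have hSnorm : ∀ n (σ : ℕ → ℝ) (z : X), (∀ j, |σ j| ≤ |ι z j|) → ‖S n σ‖ ≤ ‖z‖ := by
    intro n σ z h
    refine hsolid _ _ fun j => ?_
    rw [hιS]
    split
    · exact h j
    · simp [abs_nonneg]
  have hSmem : ∀ n (σ : ℕ → ℝ), S n σ ∈ E := by
    intro n σ
    exact Submodule.sum_mem _ fun k _ => Submodule.smul_mem _ _ (heXmem k)
  have hSlin : ∀ n (σ τ : ℕ → ℝ), S n (σ + τ) = S n σ + S n τ := by
    intro n σ τ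
    simp [hS, add_smul, Finset.sum_add_distrib]
  -- truncations of elements of E converge to them
  have hfin : ∀ w ∈ Submodule.span ℝ (Set.range eX), ∃ N, ∀ j, N ≤ j → ι w j = 0 := by
    intro w hw
    induction hw using Submodule.span_induction with
    | mem w hw =>
        obtain ⟨k, rfl⟩ := hw
        exact ⟨k + 1, fun j hj => by
          rw [heX]
          exact Pi.single_eq_of_ne (by omega) 1⟩
    | zero => exact ⟨0, fun j _ => by simp⟩
    | add a b _ _ ha hb =>
        obtain ⟨Na, hNa⟩ := ha
        obtain ⟨Nb, hNb⟩ := hb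
        exact ⟨max Na Nb, fun j hj => by
          rw [map_add]
          simp [hNa j (le_trans (le_max_left _ _) hj), hNb j (le_trans (le_max_right _ _) hj)]⟩
    | smul c a _ ha =>
        obtain ⟨N, hN⟩ := ha
        exact ⟨N, fun j hj => by rw [map_smul]; simp [hN j hj]⟩
  have hTrunc : ∀ z : X, z ∈ E → Tendsto (fun n => S n (ι z)) atTop (nhds z) := by
    intro z hz
    rw [Metric.tendsto_atTop]
    intro δ hδ
    have hz' : z ∈ closure (Submodule.span ℝ (Set.range eX) : Set X) := hz
    obtain ⟨w, hw, hwz⟩ := Metric.mem_closure_iff.mp hz' (δ / 2) (by linarith)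
    obtain ⟨N, hN⟩ := hfin w hw
    refine ⟨N, fun n hn => ?_⟩
    have hSw : S n (ι w) = w := by
      apply hinj
      funext j
      rw [hιS]
      split
      · rfl
      · exact (hN j (by omega)).symm
    have hsz : S n (ι z) - S n (ι w) = S n (ι (z - w)) := by
      rw [map_sub]
      simp [hS, sub_smul, Finset.sum_sub_distrib]
    have h1 : ‖S n (ι (z - w))‖ ≤ ‖z - w‖ := hSnorm _ _ _ fun j => le_refl _
    have hdzw : ‖z - w‖ < δ / 2 := by
      rw [← dist_eq_norm]; exact hwz
    have : dist (S n (ι z)) z ≤ ‖S n (ι (z - w))‖ + ‖w - z‖ := by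
      rw [dist_eq_norm]
      calc ‖S n (ι z) - z‖ = ‖S n (ι (z - w)) + (w - z)‖ := by rw [← hsz]; rw [hSw]; abel_nf
        _ ≤ _ := norm_add_le _ _
    have hwz' : ‖w - z‖ < δ / 2 := by rwa [norm_sub_rev]
    linarith
  -- coefficients of f
  set c : ℕ → ℝ := fun k => f ⟨eX k, heXmem k⟩ with hc
  have hfS : ∀ (σ : ℕ → ℝ) n, f ⟨S n σ, hSmem n σ⟩ = ∑ k ∈ Finset.range n, σ k * c k := by
    intro σ n
    have : (⟨S n σ, hSmem n σ⟩ : E) = ∑ k ∈ Finset.range n, σ k • (⟨eX k, heXmem k⟩ : E) := by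
      apply Subtype.ext
      simp [hS]
    rw [this, map_sum]
    refine Finset.sum_congr rfl fun k _ => ?_
    rw [hc]
    show f (σ k • (⟨eX k, heXmem k⟩ : E)) = σ k * f ⟨eX k, heXmem k⟩
    rw [map_smul, smul_eq_mul]
  -- summability
  have habs : ∀ (z : X) n, ∑ k ∈ Finset.range n, |ι z k * c k| ≤ ‖z‖ := by
    intro z n
    set σ : ℕ → ℝ := fun k => if 0 ≤ ι z k * c k then ι z k else -(ι z k) with hσ
    have hσabs : ∀ j, |σ j| ≤ |ι z j| := by
      intro j; rw [hσ]; dsimp only; split <;> simp [abs_neg, le_refl]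
    have hval : ∀ k, σ k * c k = |ι z k * c k| := by
      intro k; rw [hσ]; dsimp only
      split
      · rw [abs_of_nonneg ‹_›]
      · rw [abs_of_neg (lt_of_not_ge ‹_›)]; ring
    calc ∑ k ∈ Finset.range n, |ι z k * c k| = ∑ k ∈ Finset.range n, σ k * c k := by
          simp [hval]
      _ = f ⟨S n σ, hSmem n σ⟩ := (hfS σ n).symm
      _ ≤ |f ⟨S n σ, hSmem n σ⟩| := le_abs_self _
      _ ≤ ‖f‖ * ‖(⟨S n σ, hSmem n σ⟩ : E)‖ := f.le_opNorm _
      _ = ‖S n σ‖ := by rw [hf, one_mul]; rfl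
      _ ≤ ‖z‖ := hSnorm _ _ _ hσabs
  have hsumabs : ∀ z : X, Summable fun k => |ι z k * c k| :=
    fun z => summable_of_sum_range_le (fun k => abs_nonneg _) (habs z)
  have hsum : ∀ z : X, Summable fun k => ι z k * c k := fun z => (hsumabs z).of_abs
  have hFb : ∀ z : X, |∑' k, ι z k * c k| ≤ ‖z‖ := by
    intro z
    calc |∑' k, ι z k * c k| ≤ ∑' k, |ι z k * c k| := by
          simpa only [Real.norm_eq_abs] using
            norm_tsum_le_tsum_norm (f := fun k => ι z k * c k)
              (by simpa only [Real.norm_eq_abs] using hsumabs z)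
      _ ≤ ‖z‖ := Real.tsum_le_of_sum_range_le (fun k => abs_nonneg _) (habs z)
  set Flin : X →ₗ[ℝ] ℝ :=
    { toFun := fun z => ∑' k, ι z k * c k
      map_add' := by
        intro z w
        simp only [map_add, Pi.add_apply, add_mul]
        exact Summable.tsum_add (hsum z) (hsum w)
      map_smul' := by
        intro r z
        simp only [map_smul, Pi.smul_apply, smul_eq_mul, RingHom.id_apply, mul_assoc]
        exact tsum_mul_left } with hFlin
  set F : X →L[ℝ] ℝ := Flin.mkContinuous 1 (fun z => by rw [one_mul, Real.norm_eq_abs]; exact hFb z) with hF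
  have hFz : ∀ z : X, F z = ∑' k, ι z k * c k := fun z => rfl
  -- partial sums tendsto
  have hpart : ∀ z : X, Tendsto (fun n => ∑ k ∈ Finset.range n, ι z k * c k)
      atTop (nhds (F z)) := fun z => (hsum z).hasSum.tendsto_sum_nat
  -- F extends f
  have hext : ∀ (z : X) (hz : z ∈ E), F z = f ⟨z, hz⟩ := by
    intro z hz
    have h1 : Tendsto (fun n => f ⟨S n (ι z), hSmem n (ι z)⟩) atTop (nhds (F z)) := by
      have := hpart z
      simpa only [hfS] using this
    have h2 : Tendsto (fun n => (⟨S n (ι z), hSmem n (ι z)⟩ : E)) atTop (nhds ⟨z, hz⟩) := by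
      rw [tendsto_subtype_rng]
      exact hTrunc z hz
    exact tendsto_nhds_unique h1 ((f.continuous.tendsto _).comp h2)
  have hFnorm : ‖F‖ = 1 := by
    apply le_antisymm
    · exact F.opNorm_le_bound zero_le_one fun z => by rw [one_mul, Real.norm_eq_abs]; exact hFb z
    · rw [← hf]
      refine f.opNorm_le_bound (norm_nonneg F) fun v => ?_
      have : f v = F v := by
        rw [hext v.1 v.2]
      rw [this]
      exact F.le_opNorm _
  -- apply ADP in X
  have hx' : ‖(x : X)‖ = 1 := hx
  obtain ⟨y, hy1, hyF, hymax⟩ := hADP (x : X) hx' F hFnorm ε hε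
  -- convergence of f on truncations of y
  have hfy : Tendsto (fun n => f ⟨S n (ι y), hSmem n (ι y)⟩) atTop (nhds (F y)) := by
    have := hpart y
    simpa only [hfS] using this
  -- convergence of norms
  have hxconv : Tendsto (fun n => ‖(x : X) - S n (ι (x : X))‖) atTop (nhds 0) := by
    have := (tendsto_const_nhds (x := (x : X)) (f := atTop)).sub (hTrunc (x : X) x.2)
    rw [sub_self] at this
    simpa [Function.comp_def] using (continuous_norm.tendsto _).comp this
  have hnormconv : ∀ s : ℝ, (s = 1 ∨ s = -1) →
      Tendsto (fun n => ‖(x : X) + s • S n (ι y)‖) atTop (nhds ‖(x : X) + s • y‖) := by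
    intro s _
    have h1 : Tendsto (fun n => ‖S n (ι ((x : X) + s • y))‖) atTop
        (nhds ‖(x : X) + s • y‖) := by simpa [hS] using hlim ((x : X) + s • y)
    have h2 : ∀ n, S n (ι ((x : X) + s • y)) = S n (ι (x : X)) + s • S n (ι y) := by
      intro n
      simp [hS, map_add, map_smul, add_smul, Finset.sum_add_distrib, smul_smul,
        Finset.smul_sum, mul_comm]
    refine tendsto_of_tendsto_of_dist h1 ?_
    have hb : ∀ n, dist ‖S n (ι ((x : X) + s • y))‖ ‖(x : X) + s • S n (ι y)‖
        ≤ ‖(x : X) - S n (ι (x : X))‖ := by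
      intro n
      rw [Real.dist_eq]
      calc |‖S n (ι ((x : X) + s • y))‖ - ‖(x : X) + s • S n (ι y)‖|
          ≤ ‖S n (ι ((x : X) + s • y)) - ((x : X) + s • S n (ι y))‖ :=
            abs_norm_sub_norm_le _ _
        _ = ‖(x : X) - S n (ι (x : X))‖ := by rw [h2 n, norm_sub_rev]; congr 1; abel
    have := squeeze_zero (fun n => dist_nonneg) hb hxconv
    exact this
  rcases lt_max_iff.mp hymax with hcase | hcase
  · have he1 : ∀ᶠ n in atTop, 2 - ε < ‖(x : X) + S n (ι y)‖ := by
      have := hnormconv 1 (Or.inl rfl)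
      simp only [one_smul] at this
      exact this.eventually_const_lt hcase
    have he2 : ∀ᶠ n in atTop, 1 - ε < f ⟨S n (ι y), hSmem n (ι y)⟩ :=
      hfy.eventually_const_lt hyF
    obtain ⟨n, hn1, hn2⟩ := (he1.and he2).exists
    refine ⟨⟨S n (ι y), hSmem n (ι y)⟩, ?_, ?_, ?_⟩
    · have : ‖S n (ι y)‖ ≤ ‖y‖ := hSnorm _ _ _ fun j => le_refl _
      rw [hy1] at this
      exact this
    · exact lt_of_lt_of_le hn2 (le_abs_self _)
    · exact lt_max_iff.mpr (Or.inl hn1)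
  · have he1 : ∀ᶠ n in atTop, 2 - ε < ‖(x : X) - S n (ι y)‖ := by
      have := hnormconv (-1) (Or.inr rfl)
      simp only [neg_one_smul, ← sub_eq_add_neg] at this
      exact this.eventually_const_lt hcase
    have he2 : ∀ᶠ n in atTop, 1 - ε < f ⟨S n (ι y), hSmem n (ι y)⟩ :=
      hfy.eventually_const_lt hyF
    obtain ⟨n, hn1, hn2⟩ := (he1.and he2).exists
    refine ⟨⟨S n (ι y), hSmem n (ι y)⟩, ?_, ?_, ?_⟩
    · have : ‖S n (ι y)‖ ≤ ‖y‖ := hSnorm _ _ _ fun j => le_refl _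
      rw [hy1] at this
      exact this
    · exact lt_of_lt_of_le hn2 (le_abs_self _)
    · exact lt_max_iff.mpr (Or.inr hn1)
end

section
/- For α ∈ (0,1), the space X_α = (L_1[0,1], p_α) with p_α(f) = (1/α)·sup{∫_A |f| dμ : μ(A) ≤ α} contains a subspace isometric to ℓ_∞^m, where m = ⌊1/α⌋; namely the span of χ_{[0,α]}, χ_{[α,2α]}, …, χ_{[(m−1)α, mα]} with p_α(Σ_{k=1}^m a_k χ_{[(k−1)α,kα]}) = max_k |a_k|. Consequently the Banach–Mazur distance d(X_α, L_1[0,1]) → ∞ as α → 0. -/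
open MeasureTheory Set Filter

noncomputable section

/-- Lebesgue measure on `[0,1]`. -/
def mu01 : Measure ℝ := MeasureTheory.volume.restrict (Set.Icc (0 : ℝ) 1)

/-- The norm `p_α(f) = (1/α)·sup{∫_A |f| dμ : A measurable, μ(A) ≤ α}` on `L_1[0,1]`. -/
def palpha (α : ℝ) (f : ℝ → ℝ) : ℝ :=
  α⁻¹ * sSup {r : ℝ | ∃ A : Set ℝ, MeasurableSet A ∧ mu01 A ≤ ENNReal.ofReal α ∧
    r = ∫ t in A, |f t| ∂mu01}

namespace Stmt19Aux


variable {ι : Type*} [DecidableEq ι]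

/-- sign vector attached to a subset -/
def sg (K : Finset ι) (k : ι) : ℝ := if k ∈ K then 1 else -1

lemma sg_abs (K : Finset ι) (k : ι) : |sg K k| = 1 := by
  unfold sg; split <;> simp

def RR (x : ι → ℝ) (S K : Finset ι) : ℝ := ∑ k ∈ S, sg K k * x k

lemma RR_insert (x : ι → ℝ) {S : Finset ι} {a : ι} (ha : a ∉ S) (K : Finset ι) :
    RR x (insert a S) K = sg K a * x a + RR x S K := Finset.sum_insert ha

lemma RR_insert_compat (x : ι → ℝ) {S K : Finset ι} {a : ι} (hK : K ⊆ S) (ha : a ∉ S) :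
    RR x S (insert a K) = RR x S K := by
  apply Finset.sum_congr rfl
  intro k hk
  have hka : k ≠ a := fun h => ha (h ▸ hk)
  simp [sg, Finset.mem_insert, hka]

lemma M2 (x : ι → ℝ) (S : Finset ι) :
    ∑ K ∈ S.powerset, (RR x S K) ^ 2 = 2 ^ S.card * ∑ k ∈ S, (x k) ^ 2 := by
  induction S using Finset.induction_on with
  | empty => simp [RR]
  | @insert a S ha ih =>
    rw [Finset.sum_powerset_insert ha]
    have h1 : ∀ K ∈ S.powerset, (RR x (insert a S) K) ^ 2 = (- x a + RR x S K) ^ 2 := by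
      intro K hK
      rw [Finset.mem_powerset] at hK
      rw [RR_insert x ha]
      have : a ∉ K := fun h => ha (hK h)
      simp [sg, this]
    have h2 : ∀ K ∈ S.powerset, (RR x (insert a S) (insert a K)) ^ 2 = (x a + RR x S K) ^ 2 := by
      intro K hK
      rw [Finset.mem_powerset] at hK
      rw [RR_insert x ha, RR_insert_compat x hK ha]
      simp [sg]
    rw [Finset.sum_congr rfl h1, Finset.sum_congr rfl h2, ← Finset.sum_add_distrib]
    have h3 : ∀ K ∈ S.powerset, ((- x a + RR x S K) ^ 2 + (x a + RR x S K) ^ 2)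
        = 2 * (x a) ^ 2 + 2 * (RR x S K) ^ 2 := by intro K _; ring
    rw [Finset.sum_congr rfl h3, Finset.sum_add_distrib, Finset.sum_const, Finset.card_powerset,
      nsmul_eq_mul, ← Finset.mul_sum, ih, Finset.card_insert_of_notMem ha,
      Finset.sum_insert ha, pow_succ]
    push_cast
    ring

lemma M4 (x : ι → ℝ) (S : Finset ι) :
    ∑ K ∈ S.powerset, (RR x S K) ^ 4 ≤ 3 * 2 ^ S.card * (∑ k ∈ S, (x k) ^ 2) ^ 2 := by
  induction S using Finset.induction_on with
  | empty => simp [RR]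
  | @insert a S ha ih =>
    rw [Finset.sum_powerset_insert ha]
    have h1 : ∀ K ∈ S.powerset, (RR x (insert a S) K) ^ 4 = (- x a + RR x S K) ^ 4 := by
      intro K hK
      rw [Finset.mem_powerset] at hK
      rw [RR_insert x ha]
      have : a ∉ K := fun h => ha (hK h)
      simp [sg, this]
    have h2 : ∀ K ∈ S.powerset, (RR x (insert a S) (insert a K)) ^ 4 = (x a + RR x S K) ^ 4 := by
      intro K hK
      rw [Finset.mem_powerset] at hK
      rw [RR_insert x ha, RR_insert_compat x hK ha]
      simp [sg]
    rw [Finset.sum_congr rfl h1, Finset.sum_congr rfl h2, ← Finset.sum_add_distrib]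
    have h3 : ∀ K ∈ S.powerset, ((- x a + RR x S K) ^ 4 + (x a + RR x S K) ^ 4)
        = 2 * (RR x S K) ^ 4 + 12 * (x a) ^ 2 * (RR x S K) ^ 2 + 2 * (x a) ^ 4 := by
      intro K _; ring
    rw [Finset.sum_congr rfl h3]
    rw [Finset.sum_add_distrib, Finset.sum_add_distrib, Finset.sum_const, Finset.card_powerset]
    have e2 := M2 x S
    have hQ : 0 ≤ ∑ k ∈ S, (x k) ^ 2 := Finset.sum_nonneg fun k _ => sq_nonneg _
    have h4 : ∑ K ∈ S.powerset, 2 * (RR x S K) ^ 4 ≤ 2 * (3 * 2 ^ S.card * (∑ k ∈ S, (x k) ^ 2) ^ 2) := by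
      rw [← Finset.mul_sum]; linarith
    have h5 : ∑ K ∈ S.powerset, 12 * (x a) ^ 2 * (RR x S K) ^ 2
        = 12 * (x a) ^ 2 * (2 ^ S.card * ∑ k ∈ S, (x k) ^ 2) := by
      rw [← Finset.mul_sum, e2]
    rw [h5, nsmul_eq_mul, Finset.card_insert_of_notMem ha, Finset.sum_insert ha]
    have hpow : (0:ℝ) < 2 ^ S.card := by positivity
    have hps : (2:ℝ) ^ (S.card + 1) = 2 * 2 ^ S.card := by ring
    push_cast
    rw [hps]
    nlinarith [h4, sq_nonneg (x a), hQ, mul_nonneg hpow.le (sq_nonneg ((x a) ^ 2)),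
      mul_nonneg (mul_nonneg hpow.le (sq_nonneg (x a))) hQ]

lemma khintchine (x : ι → ℝ) (S : Finset ι) :
    (2 ^ S.card : ℝ) * Real.sqrt (∑ k ∈ S, (x k) ^ 2) ≤
      Real.sqrt 3 * ∑ K ∈ S.powerset, |RR x S K| := by
  set Q := ∑ k ∈ S, (x k) ^ 2 with hQdef
  set N : ℝ := (2 ^ S.card : ℝ) with hNdef
  set A := ∑ K ∈ S.powerset, |RR x S K| with hAdef
  set B3 := ∑ K ∈ S.powerset, |RR x S K| ^ 3 with hB3def
  set B4 := ∑ K ∈ S.powerset, (RR x S K) ^ 4 with hB4def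
  have hQ : 0 ≤ Q := Finset.sum_nonneg fun k _ => sq_nonneg _
  have hN : (0:ℝ) < N := by positivity
  have hA : 0 ≤ A := Finset.sum_nonneg fun K _ => abs_nonneg _
  have hB3 : 0 ≤ B3 := Finset.sum_nonneg fun K _ => pow_nonneg (abs_nonneg _) 3
  have hm2 : ∑ K ∈ S.powerset, (RR x S K) ^ 2 = N * Q := M2 x S
  have hm4 : B4 ≤ 3 * N * Q ^ 2 := M4 x S
  -- CS1 : (N*Q)^2 ≤ A * B3
  have cs1 : (N * Q) ^ 2 ≤ A * B3 := by
    have h := Finset.sum_mul_sq_le_sq_mul_sq S.powerset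
      (fun K => Real.sqrt |RR x S K|) (fun K => |RR x S K| * Real.sqrt |RR x S K|)
    have e1 : ∀ K ∈ S.powerset,
        Real.sqrt |RR x S K| * (|RR x S K| * Real.sqrt |RR x S K|) = (RR x S K) ^ 2 := by
      intro K _
      have hs := Real.mul_self_sqrt (abs_nonneg (RR x S K))
      calc Real.sqrt |RR x S K| * (|RR x S K| * Real.sqrt |RR x S K|)
          = (Real.sqrt |RR x S K| * Real.sqrt |RR x S K|) * |RR x S K| := by ring
        _ = |RR x S K| * |RR x S K| := by rw [hs]
        _ = (RR x S K) ^ 2 := by rw [← abs_mul, abs_mul_self]; ring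
    have e2 : ∀ K ∈ S.powerset, (Real.sqrt |RR x S K|) ^ 2 = |RR x S K| :=
      fun K _ => Real.sq_sqrt (abs_nonneg _)
    have e3 : ∀ K ∈ S.powerset, (|RR x S K| * Real.sqrt |RR x S K|) ^ 2 = |RR x S K| ^ 3 := by
      intro K _
      have hs := Real.sq_sqrt (abs_nonneg (RR x S K))
      calc (|RR x S K| * Real.sqrt |RR x S K|) ^ 2
          = |RR x S K| ^ 2 * (Real.sqrt |RR x S K|) ^ 2 := by ring
        _ = |RR x S K| ^ 2 * |RR x S K| := by rw [hs]
        _ = |RR x S K| ^ 3 := by ring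
    rw [Finset.sum_congr rfl e1, Finset.sum_congr rfl e2, Finset.sum_congr rfl e3, hm2] at h
    exact h
  -- CS2 : B3^2 ≤ (N*Q) * B4
  have cs2 : B3 ^ 2 ≤ (N * Q) * B4 := by
    have h := Finset.sum_mul_sq_le_sq_mul_sq S.powerset
      (fun K => |RR x S K|) (fun K => (RR x S K) ^ 2)
    have e1 : ∀ K ∈ S.powerset, |RR x S K| * (RR x S K) ^ 2 = |RR x S K| ^ 3 := by
      intro K _
      rw [← sq_abs]; ring
    have e2 : ∀ K ∈ S.powerset, |RR x S K| ^ 2 = (RR x S K) ^ 2 := fun K _ => sq_abs _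
    have e3 : ∀ K ∈ S.powerset, ((RR x S K) ^ 2) ^ 2 = (RR x S K) ^ 4 := by intro K _; ring
    rw [Finset.sum_congr rfl e1, Finset.sum_congr rfl e2, Finset.sum_congr rfl e3, hm2] at h
    exact h
  set u := Real.sqrt Q with hudef
  have hu : 0 ≤ u := Real.sqrt_nonneg _
  have hu2 : u ^ 2 = Q := Real.sq_sqrt hQ
  have hs3 : (Real.sqrt 3) ^ 2 = 3 := Real.sq_sqrt (by norm_num)
  have hs3nn : 0 ≤ Real.sqrt 3 := Real.sqrt_nonneg _
  by_cases hu0 : u = 0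
  · rw [hu0, mul_zero]
    positivity
  · have hupos : 0 < u := lt_of_le_of_ne hu (Ne.symm hu0)
    -- B3 ≤ √3 * N * u^3
    have hb : B3 ≤ Real.sqrt 3 * N * u ^ 3 := by
      have hsq : B3 ^ 2 ≤ (Real.sqrt 3 * N * u ^ 3) ^ 2 := by
        have e : (Real.sqrt 3 * N * u ^ 3) ^ 2 = 3 * N ^ 2 * Q ^ 3 := by
          rw [mul_pow, mul_pow, hs3]
          rw [← hu2]; ring
        rw [e]
        have h7 : N * Q * B4 ≤ N * Q * (3 * N * Q ^ 2) :=
          mul_le_mul_of_nonneg_left hm4 (by positivity)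
        nlinarith [cs2, h7]
      have h1 := Real.sqrt_le_sqrt hsq
      rwa [Real.sqrt_sq hB3, Real.sqrt_sq (by positivity)] at h1
    -- conclude
    have key : N ^ 2 * u ^ 4 ≤ Real.sqrt 3 * A * N * u ^ 3 := by
      have h1 : (N * Q) ^ 2 ≤ A * (Real.sqrt 3 * N * u ^ 3) :=
        le_trans cs1 (by nlinarith [hb, hA])
      calc N ^ 2 * u ^ 4 = (N * Q) ^ 2 := by rw [← hu2]; ring
        _ ≤ A * (Real.sqrt 3 * N * u ^ 3) := h1
        _ = Real.sqrt 3 * A * N * u ^ 3 := by ring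
    have hNu3 : 0 < N * u ^ 3 := by positivity
    have h9 : (N * u) * (N * u ^ 3) ≤ (Real.sqrt 3 * A) * (N * u ^ 3) := by nlinarith [key]
    exact le_of_mul_le_mul_right h9 hNu3

lemma l1_le_l2 (x : ι → ℝ) (S : Finset ι) :
    ∑ k ∈ S, |x k| ≤ Real.sqrt S.card * Real.sqrt (∑ k ∈ S, (x k) ^ 2) := by
  have h := Finset.sum_mul_sq_le_sq_mul_sq S (fun _ => (1:ℝ)) (fun k => |x k|)
  simp only [one_pow, one_mul, Finset.sum_const, nsmul_eq_mul, mul_one, sq_abs] at h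
  have h1 : (∑ k ∈ S, |x k|) ^ 2 ≤ (S.card : ℝ) * ∑ k ∈ S, (x k) ^ 2 := h
  have h2 : ∑ k ∈ S, |x k| = Real.sqrt ((∑ k ∈ S, |x k|) ^ 2) :=
    (Real.sqrt_sq (Finset.sum_nonneg fun k _ => abs_nonneg _)).symm
  rw [h2, ← Real.sqrt_mul (Nat.cast_nonneg _)]
  exact Real.sqrt_le_sqrt h1



instance : IsFiniteMeasure mu01 := by
  constructor
  rw [mu01, Measure.restrict_apply_univ, Real.volume_Icc]
  simp

/-- the function spanning the copy of `ℓ_∞^m` -/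
def Fm (α : ℝ) (m : ℕ) (a : Fin m → ℝ) : ℝ → ℝ := fun t =>
  ∑ k : Fin m, Set.indicator (Set.Icc ((k : ℝ) * α) (((k : ℝ) + 1) * α)) (fun _ => a k) t

lemma Fm_integrable (α : ℝ) (m : ℕ) (a : Fin m → ℝ) : Integrable (Fm α m a) mu01 := by
  apply integrable_finset_sum
  intro k _
  rw [integrable_indicator_iff measurableSet_Icc]
  exact integrableOn_const (measure_ne_top _ _)

/-- the exceptional set of multiples of `α` -/
def Nset (α : ℝ) : Set ℝ := Set.range (fun j : ℤ => (j : ℝ) * α)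

lemma Nset_null (α : ℝ) : mu01 (Nset α) = 0 := by
  have h1 : MeasureTheory.volume (Nset α) = 0 :=
    Set.Countable.measure_zero (Set.countable_range _) _
  refine le_antisymm (le_trans ?_ h1.le) zero_le
  rw [mu01]
  exact Measure.restrict_le_self _

lemma two_intervals (α : ℝ) (hα : 0 < α) {m : ℕ} {k k' : Fin m} (hne : k ≠ k') {t : ℝ}
    (h1 : t ∈ Set.Icc ((k : ℝ) * α) (((k : ℝ) + 1) * α))
    (h2 : t ∈ Set.Icc ((k' : ℝ) * α) (((k' : ℝ) + 1) * α)) : t ∈ Nset α := by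
  rcases lt_or_gt_of_ne (fun h : (k : ℕ) = (k' : ℕ) => hne (Fin.ext h)) with h | h
  · have hle : ((k : ℝ) + 1) ≤ (k' : ℝ) := by exact_mod_cast Nat.succ_le_of_lt h
    have : t = ((k : ℝ) + 1) * α := le_antisymm h1.2
      (le_trans (mul_le_mul_of_nonneg_right hle hα.le) h2.1)
    exact ⟨(k : ℤ) + 1, by push_cast; linarith⟩
  · have hle : ((k' : ℝ) + 1) ≤ (k : ℝ) := by exact_mod_cast Nat.succ_le_of_lt h
    have : t = ((k' : ℝ) + 1) * α := le_antisymm h2.2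
      (le_trans (mul_le_mul_of_nonneg_right hle hα.le) h1.1)
    exact ⟨(k' : ℤ) + 1, by push_cast; linarith⟩

lemma Fm_eq_of_mem (α : ℝ) (hα : 0 < α) {m : ℕ} (a : Fin m → ℝ) {t : ℝ}
    (ht : t ∉ Nset α) {k : Fin m} (hk : t ∈ Set.Icc ((k : ℝ) * α) (((k : ℝ) + 1) * α)) :
    Fm α m a t = a k := by
  rw [Fm, Finset.sum_eq_single_of_mem k (Finset.mem_univ k)]
  · exact Set.indicator_of_mem hk _
  · intro j _ hj
    apply Set.indicator_of_notMem
    intro hmem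
    exact ht (two_intervals α hα hj hmem hk)

lemma Fm_abs_le (α : ℝ) (hα : 0 < α) {m : ℕ} (a : Fin m → ℝ) (C : ℝ) (hC : 0 ≤ C)
    (hCk : ∀ k, |a k| ≤ C) {t : ℝ} (ht : t ∉ Nset α) : |Fm α m a t| ≤ C := by
  by_cases h : ∃ k : Fin m, t ∈ Set.Icc ((k : ℝ) * α) (((k : ℝ) + 1) * α)
  · obtain ⟨k, hk⟩ := h
    rw [Fm_eq_of_mem α hα a ht hk]
    exact hCk k
  · push_neg at h
    have : Fm α m a t = 0 := by
      rw [Fm]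
      apply Finset.sum_eq_zero
      intro k _
      exact Set.indicator_of_notMem (h k) _
    rw [this, abs_zero]
    exact hC

lemma Fm_abs_le_ae (α : ℝ) (hα : 0 < α) {m : ℕ} (a : Fin m → ℝ) (C : ℝ) (hC : 0 ≤ C)
    (hCk : ∀ k, |a k| ≤ C) : ∀ᵐ t ∂mu01, |Fm α m a t| ≤ C := by
  rw [ae_iff]
  apply measure_mono_null (fun t htmem => ?_) (Nset_null α)
  by_contra htN
  exact htmem (Fm_abs_le α hα a C hC hCk htN)

theorem lemA (α : ℝ) (hα : α ∈ Set.Ioo (0 : ℝ) 1) (m : ℕ) (hm1 : 1 ≤ m)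
    (hm : (m : ℝ) * α ≤ 1) (a : Fin m → ℝ) :
    palpha α (Fm α m a) = ⨆ k, |a k| := by
  have hα0 := hα.1
  haveI : Nonempty (Fin m) := ⟨⟨0, hm1⟩⟩
  set C := ⨆ k, |a k| with hCdef
  obtain ⟨k₀, hk₀⟩ : ∃ k₀, |a k₀| = C := exists_eq_ciSup_of_finite
  have hCk : ∀ k, |a k| ≤ C := fun k =>
    le_ciSup (f := fun k => |a k|) (Set.Finite.bddAbove (Set.finite_range _)) k
  have hC : 0 ≤ C := le_trans (abs_nonneg _) (hCk k₀)
  set Sset := {r : ℝ | ∃ A : Set ℝ, MeasurableSet A ∧ mu01 A ≤ ENNReal.ofReal α ∧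
    r = ∫ t in A, |Fm α m a t| ∂mu01} with hSdef
  -- upper bound
  have hub : ∀ r ∈ Sset, r ≤ α * C := by
    rintro r ⟨A, hAm, hAμ, rfl⟩
    have hint1 : Integrable (fun t => |Fm α m a t|) (mu01.restrict A) :=
      ((Fm_integrable α m a).abs).restrict
    have hint2 : Integrable (fun _ : ℝ => C) (mu01.restrict A) := integrable_const C
    have h1 : ∫ t in A, |Fm α m a t| ∂mu01 ≤ ∫ t in A, C ∂mu01 :=
      integral_mono_ae hint1 hint2
        (ae_restrict_of_ae (Fm_abs_le_ae α hα0 a C hC hCk))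
    have h2 : ∫ t in A, C ∂mu01 = (mu01 A).toReal * C := by
      rw [setIntegral_const, smul_eq_mul, measureReal_def]
    have h3 : (mu01 A).toReal ≤ α := ENNReal.toReal_le_of_le_ofReal hα0.le hAμ
    calc ∫ t in A, |Fm α m a t| ∂mu01 ≤ (mu01 A).toReal * C := h2 ▸ h1
      _ ≤ α * C := mul_le_mul_of_nonneg_right h3 hC
  -- the witness set
  set A₀ := Set.Icc ((k₀ : ℝ) * α) (((k₀ : ℝ) + 1) * α) with hA₀def
  have hA₀sub : A₀ ⊆ Set.Icc (0 : ℝ) 1 := by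
    intro t ht
    constructor
    · exact le_trans (by positivity) ht.1
    · refine le_trans ht.2 (le_trans ?_ hm)
      have : ((k₀ : ℝ) + 1) ≤ (m : ℝ) := by exact_mod_cast Nat.succ_le_of_lt k₀.isLt
      exact mul_le_mul_of_nonneg_right this hα0.le
  have hA₀μ : mu01 A₀ = ENNReal.ofReal α := by
    rw [mu01, Measure.restrict_apply measurableSet_Icc, Set.inter_eq_left.mpr hA₀sub,
      Real.volume_Icc]
    congr 1
    ring
  have hval : ∫ t in A₀, |Fm α m a t| ∂mu01 = α * C := by
    have hae : ∀ᵐ t ∂(mu01.restrict A₀), |Fm α m a t| = |a k₀| := by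
      have h1 : ∀ᵐ t ∂(mu01.restrict A₀), t ∈ A₀ := ae_restrict_mem measurableSet_Icc
      have h2 : ∀ᵐ t ∂(mu01.restrict A₀), t ∉ Nset α := by
        apply ae_restrict_of_ae
        rw [ae_iff]
        apply measure_mono_null (fun t htmem => ?_) (Nset_null α)
        by_contra htN
        exact htmem (by simpa using htN)
      filter_upwards [h1, h2] with t htA htN
      rw [Fm_eq_of_mem α hα0 a htN htA]
    rw [integral_congr_ae hae, setIntegral_const, measureReal_def, hA₀μ, smul_eq_mul,
      ENNReal.toReal_ofReal hα0.le, hk₀]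
  have hmem : α * C ∈ Sset := ⟨A₀, measurableSet_Icc, le_of_eq hA₀μ, hval.symm⟩
  have hsup : sSup Sset = α * C :=
    le_antisymm (csSup_le ⟨α * C, hmem⟩ hub) (le_csSup ⟨α * C, hub⟩ hmem)
  rw [palpha]
  rw [show {r : ℝ | ∃ A : Set ℝ, MeasurableSet A ∧ mu01 A ≤ ENNReal.ofReal α ∧
    r = ∫ t in A, |Fm α m a t| ∂mu01} = Sset from rfl, hsup, ← mul_assoc,
    inv_mul_cancel₀ (ne_of_gt hα0), one_mul]


end Stmt19Aux

open Stmt19Aux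

/-- For `α ∈ (0,1)`, the space `X_α = (L_1[0,1], p_α)` contains a
subspace isometric to `ℓ_∞^m`, `m = ⌊1/α⌋`: the span of the indicator functions
`χ_{[0,α]}, χ_{[α,2α]}, …, χ_{[(m−1)α, mα]}`, on which
`p_α(Σ_{k=1}^m a_k χ_{[(k−1)α,kα]}) = max_k |a_k|`. Consequently the Banach–Mazur
distance `d(X_α, L_1[0,1]) → ∞` as `α → 0`. -/
theorem stmt19 (α : ℝ) (hα : α ∈ Set.Ioo (0 : ℝ) 1) :
    -- the isometric copy of `ℓ_∞^m`, `m = ⌊1/α⌋`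
    (∀ a : Fin (Nat.floor (1 / α)) → ℝ,
      palpha α (fun t => ∑ k : Fin (Nat.floor (1 / α)),
          Set.indicator (Set.Icc ((k : ℝ) * α) (((k : ℝ) + 1) * α)) (fun _ => a k) t)
        = ⨆ k : Fin (Nat.floor (1 / α)), |a k|) ∧
    -- the Banach–Mazur distance from `X_α` to `L_1[0,1]` tends to `∞` as `α → 0`
    (∀ M : ℝ, ∃ α₀ : ℝ, 0 < α₀ ∧ ∀ β : ℝ, 0 < β → β < α₀ →
      ∀ (T : (ℝ → ℝ) ≃ₗ[ℝ] (ℝ → ℝ)) (c₁ c₂ : ℝ), 0 < c₁ → 0 < c₂ →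
        (∀ f : ℝ → ℝ, Integrable f mu01 →
          Integrable (T f) mu01 ∧ (∫ t, |T f t| ∂mu01) ≤ c₁ * palpha β f) →
        (∀ f : ℝ → ℝ, Integrable f mu01 →
          Integrable (T.symm f) mu01 ∧ palpha β (T.symm f) ≤ c₂ * ∫ t, |f t| ∂mu01) →
        M ≤ c₁ * c₂) := by
  have floor_facts : ∀ γ : ℝ, γ ∈ Set.Ioo (0:ℝ) 1 →
      1 ≤ Nat.floor (1 / γ) ∧ ((Nat.floor (1 / γ) : ℝ)) * γ ≤ 1 := by
    intro γ hγ
    constructor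
    · apply Nat.le_floor
      rw [Nat.cast_one, le_div_iff₀ hγ.1]
      linarith [hγ.2]
    · have h := Nat.floor_le (le_of_lt (div_pos one_pos hγ.1))
      calc ((Nat.floor (1 / γ) : ℝ)) * γ ≤ (1 / γ) * γ :=
            mul_le_mul_of_nonneg_right h hγ.1.le
        _ = 1 := by rw [one_div, inv_mul_cancel₀ (ne_of_gt hγ.1)]
  constructor
  · -- Part 1
    intro a
    exact lemA α hα _ (floor_facts α hα).1 (floor_facts α hα).2 a
  · -- Part 2
    intro M
    set n : ℕ := ⌈3 * M ^ 2⌉₊ + 1 with hndef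
    have hn0 : 0 < (n : ℝ) := by exact_mod_cast Nat.succ_pos _
    refine ⟨1 / n, by positivity, ?_⟩
    intro β hβ0 hβn T c₁ c₂ hc₁ hc₂ hT hTS
    set m := Nat.floor (1 / β) with hmdef
    have hβ1 : β < 1 := lt_of_lt_of_le hβn (by
      rw [div_le_one hn0]
      exact_mod_cast Nat.succ_le_succ (Nat.zero_le _))
    have hβIoo : β ∈ Set.Ioo (0:ℝ) 1 := ⟨hβ0, hβ1⟩
    have hnm : n ≤ m := by
      apply Nat.le_floor
      rw [le_div_iff₀ hβ0]
      have h := mul_lt_mul_of_pos_left hβn hn0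
      rw [mul_one_div, div_self (ne_of_gt hn0)] at h
      linarith
    have hm1 : 1 ≤ m := le_trans (Nat.succ_le_succ (Nat.zero_le _)) hnm
    have hmβ : (m : ℝ) * β ≤ 1 := (floor_facts β hβIoo).2
    haveI : Nonempty (Fin m) := ⟨⟨0, hm1⟩⟩
    -- notation
    set G : Fin m → ℝ → ℝ := fun k => Fm β m (Pi.single k 1) with hGdef
    have hGint : ∀ k, Integrable (G k) mu01 := fun k => Fm_integrable _ _ _
    set y : Fin m → ℝ → ℝ := fun k => T (G k) with hydef
    have hyint : ∀ k, Integrable (y k) mu01 := fun k => (hT (G k) (hGint k)).1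
    -- G k as a 1-indicator
    have hic : ∀ (s : Set ℝ) (c : ℝ) (t : ℝ),
        s.indicator (fun _ => c) t = c * s.indicator (fun _ => (1:ℝ)) t := by
      intro s c t; by_cases h : t ∈ s <;> simp [h]
    have hG : ∀ (k : Fin m) (t : ℝ), G k t =
        Set.indicator (Set.Icc ((k:ℝ)*β) (((k:ℝ)+1)*β)) (fun _ => (1:ℝ)) t := by
      intro k t
      show Fm β m (Pi.single k 1) t = _
      rw [Fm, Finset.sum_eq_single_of_mem k (Finset.mem_univ k)]
      · simp
      · intro j _ hj
        have h0 : (Pi.single k 1 : Fin m → ℝ) j = 0 := by rw [Pi.single_eq_of_ne hj]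
        simp [h0]
    -- linearity
    have hFlin : ∀ a : Fin m → ℝ, Fm β m a = ∑ k : Fin m, a k • G k := by
      intro a
      funext t
      rw [Finset.sum_apply]
      simp only [Pi.smul_apply, smul_eq_mul]
      rw [Fm]
      apply Finset.sum_congr rfl
      intro j _
      rw [hic, ← hG]
    have hTF : ∀ (a : Fin m → ℝ) (t : ℝ),
        T (Fm β m a) t = ∑ k : Fin m, a k * y k t := by
      intro a t
      rw [hFlin a, map_sum]
      simp only [_root_.map_smul, Finset.sum_apply, Pi.smul_apply, smul_eq_mul]
      rfl
    -- palpha values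
    have hsup1 : ∀ k : Fin m, palpha β (G k) = 1 := by
      intro k
      show palpha β (Fm β m (Pi.single k 1)) = 1
      rw [lemA β hβIoo m hm1 hmβ]
      apply le_antisymm
      · apply ciSup_le
        intro j
        by_cases hj : j = k
        · subst hj; simp
        · simp [Pi.single_eq_of_ne hj]
      · have h := le_ciSup (f := fun j => |Pi.single k (1:ℝ) j|)
          (Set.Finite.bddAbove (Set.finite_range _)) k
        simpa using h
    have hsupK : ∀ K : Finset (Fin m), palpha β (Fm β m (sg K)) = 1 := by
      intro K
      rw [lemA β hβIoo m hm1 hmβ]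
      simp only [sg_abs]
      exact ciSup_const
    -- lower bound per k
    have hyk : ∀ k : Fin m, 1 ≤ c₂ * ∫ t, |y k t| ∂mu01 := by
      intro k
      have h := (hTS (y k) (hyint k)).2
      have e : T.symm (y k) = G k := T.symm_apply_apply (G k)
      rw [e, hsup1 k] at h
      exact h
    -- upper bound per sign pattern
    have hfabs : ∀ K : Finset (Fin m),
        (fun t => |∑ k : Fin m, sg K k * y k t|) = fun t => |T (Fm β m (sg K)) t| :=
      fun K => funext fun t => by rw [hTF]
    have hJK : ∀ K : Finset (Fin m),
        ∫ t, |∑ k : Fin m, sg K k * y k t| ∂mu01 ≤ c₁ := by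
      intro K
      have h := (hT (Fm β m (sg K)) (Fm_integrable _ _ _)).2
      rw [hsupK K, mul_one] at h
      calc ∫ t, |∑ k : Fin m, sg K k * y k t| ∂mu01
          = ∫ t, |T (Fm β m (sg K)) t| ∂mu01 := by rw [hfabs K]
        _ ≤ c₁ := h
    -- pointwise Khintchine bound
    have hpt : ∀ t : ℝ, (2:ℝ) ^ m * ∑ k : Fin m, |y k t| ≤
        Real.sqrt m * Real.sqrt 3 *
          ∑ K ∈ (Finset.univ : Finset (Fin m)).powerset, |∑ k : Fin m, sg K k * y k t| := by
      intro t
      have h1 := l1_le_l2 (fun k => y k t) Finset.univ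
      have h2 := khintchine (fun k => y k t) Finset.univ
      simp only [RR] at h2
      rw [Finset.card_univ, Fintype.card_fin] at h1 h2
      have hQnn : (0:ℝ) ≤ Real.sqrt (∑ k : Fin m, (y k t) ^ 2) := Real.sqrt_nonneg _
      have hmnn : (0:ℝ) ≤ Real.sqrt m := Real.sqrt_nonneg _
      have hp : (0:ℝ) < 2 ^ m := by positivity
      nlinarith [h1, h2, mul_le_mul_of_nonneg_left h2 hmnn,
        mul_le_mul_of_nonneg_left h1 hp.le]
    -- integrate
    have hintK : ∀ K ∈ (Finset.univ : Finset (Fin m)).powerset,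
        Integrable (fun t => |∑ k : Fin m, sg K k * y k t|) mu01 := by
      intro K _
      rw [hfabs K]
      exact ((hT _ (Fm_integrable β m (sg K))).1).abs
    have step2 : (2:ℝ) ^ m * ∑ k : Fin m, ∫ t, |y k t| ∂mu01 ≤
        Real.sqrt m * Real.sqrt 3 * ((2:ℝ) ^ m * c₁) := by
      have hintL : Integrable (fun t => ∑ k : Fin m, |y k t|) mu01 :=
        integrable_finset_sum _ (fun k _ => (hyint k).abs)
      have hintR : Integrable (fun t => ∑ K ∈ (Finset.univ : Finset (Fin m)).powerset,
          |∑ k : Fin m, sg K k * y k t|) mu01 :=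
        integrable_finset_sum _ hintK
      have hmono : ∫ t, (2:ℝ) ^ m * ∑ k : Fin m, |y k t| ∂mu01 ≤
          ∫ t, Real.sqrt m * Real.sqrt 3 *
            ∑ K ∈ (Finset.univ : Finset (Fin m)).powerset, |∑ k : Fin m, sg K k * y k t| ∂mu01 :=
        integral_mono (hintL.const_mul _) (hintR.const_mul _) (fun t => hpt t)
      rw [integral_const_mul, integral_const_mul,
        integral_finset_sum _ (fun k _ => (hyint k).abs),
        integral_finset_sum _ hintK] at hmono
      refine le_trans hmono ?_
      apply mul_le_mul_of_nonneg_left _ (by positivity)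
      calc ∑ K ∈ (Finset.univ : Finset (Fin m)).powerset,
            ∫ t, |∑ k : Fin m, sg K k * y k t| ∂mu01
          ≤ ∑ K ∈ (Finset.univ : Finset (Fin m)).powerset, c₁ :=
            Finset.sum_le_sum (fun K _ => hJK K)
        _ = (2:ℝ) ^ m * c₁ := by
            rw [Finset.sum_const, Finset.card_powerset, Finset.card_univ, Fintype.card_fin,
              nsmul_eq_mul]
            push_cast
            ring
    have step1 : (m : ℝ) ≤ c₂ * ∑ k : Fin m, ∫ t, |y k t| ∂mu01 := by
      have h := Finset.sum_le_sum (fun k (_ : k ∈ Finset.univ) => hyk k)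
      simpa [← Finset.mul_sum] using h
    have hsumI : ∑ k : Fin m, ∫ t, |y k t| ∂mu01 ≤ Real.sqrt m * Real.sqrt 3 * c₁ := by
      have h2m : (0:ℝ) < 2 ^ m := by positivity
      have e : Real.sqrt m * Real.sqrt 3 * ((2:ℝ) ^ m * c₁)
          = (2:ℝ) ^ m * (Real.sqrt m * Real.sqrt 3 * c₁) := by ring
      rw [e] at step2
      exact le_of_mul_le_mul_left step2 h2m
    have final1 : (m : ℝ) ≤ Real.sqrt 3 * Real.sqrt m * (c₁ * c₂) := by
      calc (m : ℝ) ≤ c₂ * ∑ k : Fin m, ∫ t, |y k t| ∂mu01 := step1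
        _ ≤ c₂ * (Real.sqrt m * Real.sqrt 3 * c₁) :=
            mul_le_mul_of_nonneg_left hsumI hc₂.le
        _ = Real.sqrt 3 * Real.sqrt m * (c₁ * c₂) := by ring
    by_cases hM : M ≤ 0
    · exact le_trans hM (le_of_lt (mul_pos hc₁ hc₂))
    · push_neg at hM
      have hmge : 3 * M ^ 2 < (m : ℝ) := by
        have h1 : 3 * M ^ 2 ≤ (⌈3 * M ^ 2⌉₊ : ℝ) := Nat.le_ceil _
        have h2 : (n : ℝ) ≤ (m : ℝ) := by exact_mod_cast hnm
        have h3 : (n : ℝ) = (⌈3 * M ^ 2⌉₊ : ℝ) + 1 := by rw [hndef]; push_cast; ring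
        linarith
      have hsm : 0 < Real.sqrt m := Real.sqrt_pos.mpr (by exact_mod_cast hm1)
      have hsm2 : Real.sqrt m * Real.sqrt m = (m : ℝ) := Real.mul_self_sqrt (Nat.cast_nonneg m)
      have hs3 : Real.sqrt 3 * Real.sqrt 3 = 3 := Real.mul_self_sqrt (by norm_num)
      have h4 : Real.sqrt m ≤ Real.sqrt 3 * (c₁ * c₂) := by
        have h' : Real.sqrt m * Real.sqrt m ≤ (Real.sqrt 3 * (c₁ * c₂)) * Real.sqrt m := by
          rw [hsm2, show (Real.sqrt 3 * (c₁ * c₂)) * Real.sqrt m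
            = Real.sqrt 3 * Real.sqrt m * (c₁ * c₂) from by ring]
          exact final1
        exact le_of_mul_le_mul_right h' hsm
      have h5 : M * Real.sqrt 3 ≤ Real.sqrt m := by
        have hsq : (M * Real.sqrt 3) ^ 2 ≤ (Real.sqrt m) ^ 2 := by
          nlinarith [hs3, hsm2, hmge, sq_nonneg M]
        have hnn : 0 ≤ M * Real.sqrt 3 := mul_nonneg hM.le (Real.sqrt_nonneg _)
        nlinarith [hsq, hnn, Real.sqrt_nonneg (m:ℝ)]
      have h6 : M * Real.sqrt 3 ≤ (c₁ * c₂) * Real.sqrt 3 := by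
        calc M * Real.sqrt 3 ≤ Real.sqrt m := h5
          _ ≤ Real.sqrt 3 * (c₁ * c₂) := h4
          _ = (c₁ * c₂) * Real.sqrt 3 := by ring
      exact le_of_mul_le_mul_right h6 (Real.sqrt_pos.mpr (by norm_num))
end
end
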